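/- Complementation principle for determinantal processes on a finite set: Let E be a finite set, Z ⊆ E, and let P be a probability measure on subsets of E whose correlation functions are given by ρ(Y) = det[K(y_i,y_j)] for a kernel K on E × E. Define the involution X ↦ X Δ Z = (X ∩ (E\Z)) ∪ (Z \ X), and let P^Δ be the pushforward of P. Then P^Δ is determinantal with kernel K^Δ given by K^Δ(x,y) = K(x,y) if x ∉ Z and K^Δ(x,y) = δ_{xy} − K(x,y) if x ∈ Z. -/

import Mathlib

open Finset Matrix

section aux

variable {E : Type*} [Fintype E] [DecidableEq E]

/-- Determinant of a kernel restricted to a finset only depends on the finset. -/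
lemma det_of_congr (g : E → E → ℝ) {Y₁ Y₂ : Finset E} (h : Y₁ = Y₂) :
    Matrix.det (Matrix.of fun a b : {x // x ∈ Y₁} => g (a : E) (b : E))
      = Matrix.det (Matrix.of fun a b : {x // x ∈ Y₂} => g (a : E) (b : E)) := by
  subst h; rfl

/-- The mixed kernel matrix: rows in `W` use `δ - K`, others use `K`. -/
def Dmat (K : Matrix E E ℝ) (W Y : Finset E) :
    Matrix {x // x ∈ Y} {x // x ∈ Y} ℝ :=
  Matrix.of fun a b : {x // x ∈ Y} =>
    if (a : E) ∈ W then (if (a : E) = (b : E) then 1 else 0) - K (a : E) (b : E)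
    else K (a : E) (b : E)

lemma Dmat_det_congr (K : Matrix E E ℝ) (W : Finset E) {Y₁ Y₂ : Finset E} (h : Y₁ = Y₂) :
    (Dmat K W Y₁).det = (Dmat K W Y₂).det := by subst h; rfl

/-- an explicit equiv splitting off one element of a finset -/
def eraseEquiv (Y : Finset E) (b : E) (hb : b ∈ Y) :
    ({x // x ∈ Y.erase b} ⊕ Unit) ≃ {x // x ∈ Y} where
  toFun := Sum.elim (fun a => ⟨a.1, Finset.mem_of_mem_erase a.2⟩) (fun _ => ⟨b, hb⟩)
  invFun := fun x =>
    if h : x.1 = b then Sum.inr ()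
    else Sum.inl ⟨x.1, Finset.mem_erase.mpr ⟨h, x.2⟩⟩
  left_inv := by
    rintro (a | u)
    · have : a.1 ≠ b := (Finset.mem_erase.mp a.2).1
      simp [this]
    · simp
  right_inv := by
    rintro ⟨x, hx⟩
    by_cases h : x = b
    · subst h; simp
    · simp [h]

lemma det_erase (Y : Finset E) (b : E) (hb : b ∈ Y)
    (M : Matrix {x // x ∈ Y} {x // x ∈ Y} ℝ)
    (hrow : ∀ j : {x // x ∈ Y}, M ⟨b, hb⟩ j = if b = (j : E) then 1 else 0) :
    M.det = Matrix.det (Matrix.of fun a c : {x // x ∈ Y.erase b} =>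
      M ⟨a.1, Finset.mem_of_mem_erase a.2⟩ ⟨c.1, Finset.mem_of_mem_erase c.2⟩) := by
  rw [← Matrix.det_submatrix_equiv_self (eraseEquiv Y b hb) M]
  have h2 : M.submatrix (eraseEquiv Y b hb) (eraseEquiv Y b hb) =
      Matrix.fromBlocks
        (Matrix.of fun a c : {x // x ∈ Y.erase b} =>
          M ⟨a.1, Finset.mem_of_mem_erase a.2⟩ ⟨c.1, Finset.mem_of_mem_erase c.2⟩)
        (Matrix.of fun a (_ : Unit) => M ⟨a.1, Finset.mem_of_mem_erase a.2⟩ ⟨b, hb⟩)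
        0
        (Matrix.of fun (_ _ : Unit) => 1) := by
    ext (i | i) (j | j)
    · rfl
    · rfl
    · have hj : ¬ (b = j.1) := fun h => (Finset.mem_erase.mp j.2).1 h.symm
      simp [eraseEquiv, hrow, hj]
    · simp [eraseEquiv, hrow]
  rw [h2, Matrix.det_fromBlocks_zero₂₁]
  simp [Matrix.det_unique]

lemma det_updateRow_sub' {n : Type*} [Fintype n] [DecidableEq n]
    (M : Matrix n n ℝ) (i : n) (u v : n → ℝ) :
    Matrix.det (M.updateRow i (u - v)) =
      Matrix.det (M.updateRow i u) - Matrix.det (M.updateRow i v) := by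
  have h : u - v = u + (-1 : ℝ) • v := by ext x; simp; ring
  rw [h, Matrix.det_updateRow_add, Matrix.det_updateRow_smul]
  ring

/-- Main induction: inclusion–exclusion on the avoided set `B`. -/
lemma main_lemma (P : Finset E → ℝ) (K : Matrix E E ℝ)
    (hdet : ∀ Y : Finset E,
      (∑ X ∈ Finset.univ.filter (fun X : Finset E => Y ⊆ X), P X)
        = Matrix.det (Matrix.of fun a b : {x // x ∈ Y} => K (a : E) (b : E))) :
    ∀ B A : Finset E, Disjoint A B →
      (∑ X ∈ Finset.univ.filter (fun X : Finset E => A ⊆ X ∧ Disjoint B X), P X)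
        = (Dmat K B (A ∪ B)).det := by
  intro B
  induction B using Finset.induction_on with
  | empty =>
      intro A _
      have h1 : Finset.univ.filter (fun X : Finset E => A ⊆ X ∧ Disjoint (∅ : Finset E) X)
          = Finset.univ.filter (fun X : Finset E => A ⊆ X) := by
        apply Finset.filter_congr; intro X _; simp
      rw [h1, hdet A, Dmat_det_congr K ∅ (Finset.union_empty A)]
      have h3 : Dmat K (∅ : Finset E) A
          = Matrix.of fun a b : {x // x ∈ A} => K (a : E) (b : E) := by
        ext a b; simp [Dmat]
      rw [h3]
  | @insert b B hbB ih =>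
      intro A hA
      have hbA : b ∉ A := fun h =>
        (Finset.disjoint_left.mp hA h) (Finset.mem_insert_self b B)
      have hAB : Disjoint A B := hA.mono_right (Finset.subset_insert b B)
      have hA'B : Disjoint (insert b A) B := by
        rw [Finset.disjoint_left]
        intro x hx
        rcases Finset.mem_insert.mp hx with h | h
        · subst h; exact hbB
        · exact Finset.disjoint_left.mp hAB h
      -- sum side
      have hsplit :
          (∑ X ∈ Finset.univ.filter (fun X : Finset E => A ⊆ X ∧ Disjoint (insert b B) X), P X)
          = (∑ X ∈ Finset.univ.filter (fun X : Finset E => A ⊆ X ∧ Disjoint B X), P X)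
            - (∑ X ∈ Finset.univ.filter (fun X : Finset E => insert b A ⊆ X ∧ Disjoint B X), P X) := by
        have e1 : Finset.univ.filter (fun X : Finset E => A ⊆ X ∧ Disjoint (insert b B) X)
            = (Finset.univ.filter (fun X : Finset E => A ⊆ X ∧ Disjoint B X)).filter
                (fun X => b ∉ X) := by
          rw [Finset.filter_filter]
          apply Finset.filter_congr
          intro X _
          simp only [Finset.disjoint_insert_left]
          tauto
        have e2 : Finset.univ.filter (fun X : Finset E => insert b A ⊆ X ∧ Disjoint B X)
            = (Finset.univ.filter (fun X : Finset E => A ⊆ X ∧ Disjoint B X)).filter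
                (fun X => b ∈ X) := by
          rw [Finset.filter_filter]
          apply Finset.filter_congr
          intro X _
          simp only [Finset.insert_subset_iff]
          tauto
        rw [e1, e2]
        have := Finset.sum_filter_add_sum_filter_not
          (Finset.univ.filter (fun X : Finset E => A ⊆ X ∧ Disjoint B X))
          (fun X => b ∈ X) P
        linarith
      rw [hsplit, ih A hAB, ih (insert b A) hA'B]
      -- determinant side
      set Y : Finset E := A ∪ insert b B with hY
      have hbY : b ∈ Y := Finset.mem_union_right _ (Finset.mem_insert_self b B)
      set i : {x // x ∈ Y} := ⟨b, hbY⟩ with hi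
      set u : {x // x ∈ Y} → ℝ := fun j => if b = (j : E) then 1 else 0 with hu
      set v : {x // x ∈ Y} → ℝ := fun j => K b (j : E) with hv
      have hrowM : (Dmat K (insert b B) Y) i = u - v := by
        funext j
        simp [Dmat, hi, hu, hv]
        exact if_congr Subtype.ext_iff rfl rfl
      have hM : Dmat K (insert b B) Y
          = (Dmat K (insert b B) Y).updateRow i (u - v) := by
        rw [← hrowM, Matrix.updateRow_eq_self]
      rw [hM, det_updateRow_sub']
      -- first term: row = δ, expand
      have hdet1 : Matrix.det ((Dmat K (insert b B) Y).updateRow i u)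
          = (Dmat K B (A ∪ B)).det := by
        rw [det_erase Y b hbY _ (by intro j; simp [hi, hu])]
        have hYE : Y.erase b = A ∪ B := by
          rw [hY]
          ext x
          simp only [Finset.mem_erase, Finset.mem_union, Finset.mem_insert]
          constructor
          · rintro ⟨hx, (h | h | h)⟩
            · exact Or.inl h
            · exact absurd h hx
            · exact Or.inr h
          · rintro (h | h)
            · exact ⟨fun he => hbA (he ▸ h), Or.inl h⟩
            · exact ⟨fun he => hbB (he ▸ h), Or.inr (Or.inr h)⟩
        have hmat : (Matrix.of fun a c : {x // x ∈ Y.erase b} =>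
            ((Dmat K (insert b B) Y).updateRow i u)
              ⟨a.1, Finset.mem_of_mem_erase a.2⟩ ⟨c.1, Finset.mem_of_mem_erase c.2⟩)
            = Dmat K B (Y.erase b) := by
          ext a c
          have ha : a.1 ≠ b := (Finset.mem_erase.mp a.2).1
          have hne : (⟨a.1, Finset.mem_of_mem_erase a.2⟩ : {x // x ∈ Y}) ≠ i := by
            intro h
            exact ha (congrArg Subtype.val h)
          rw [Matrix.of_apply, Matrix.updateRow_ne hne]
          simp only [Dmat, Matrix.of_apply, Finset.mem_insert]
          by_cases h : a.1 ∈ B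
          · simp [h, ha]
          · simp [h, ha]
        rw [hmat, Dmat_det_congr K B hYE]
      -- second term: row = K
      have hdet2 : Matrix.det ((Dmat K (insert b B) Y).updateRow i v)
          = (Dmat K B (insert b A ∪ B)).det := by
        have hYeq : (insert b A) ∪ B = Y := by
          rw [hY]
          ext x
          simp only [Finset.mem_union, Finset.mem_insert]
          tauto
        have hmat : (Dmat K (insert b B) Y).updateRow i v = Dmat K B Y := by
          ext a c
          by_cases h : a = i
          · subst h
            rw [Matrix.updateRow_self]
            have hb' : b ∉ B := hbB
            simp [Dmat, hv, hi, hb']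
          · rw [Matrix.updateRow_ne h]
            have ha : a.1 ≠ b := fun he => h (Subtype.ext he)
            simp only [Dmat, Matrix.of_apply, Finset.mem_insert]
            by_cases hB : a.1 ∈ B
            · simp [hB, ha]
            · simp [hB, ha]
        rw [hmat, Dmat_det_congr K B hYeq]
      rw [hdet1, hdet2]

end aux

/-- Complementation principle for determinantal processes on a
finite set. -/
theorem stmt_15 {E : Type*} [Fintype E] [DecidableEq E] (Z : Finset E)
    (P : Finset E → ℝ) (hP0 : ∀ X, 0 ≤ P X) (hP1 : ∑ X : Finset E, P X = 1)
    (K : Matrix E E ℝ)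
    (hdet : ∀ Y : Finset E,
      (∑ X ∈ Finset.univ.filter (fun X : Finset E => Y ⊆ X), P X)
        = Matrix.det (Matrix.of fun a b : {x // x ∈ Y} => K (a : E) (b : E))) :
    ∀ Y : Finset E,
      (∑ X ∈ Finset.univ.filter (fun X : Finset E => Y ⊆ X), P (symmDiff X Z))
        = Matrix.det (Matrix.of fun a b : {x // x ∈ Y} =>
            if (a : E) ∈ Z then (if (a : E) = (b : E) then 1 else 0) - K (a : E) (b : E)
            else K (a : E) (b : E)) := by
  intro Y
  have hreindex :
      (∑ X ∈ Finset.univ.filter (fun X : Finset E => Y ⊆ X), P (symmDiff X Z))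
      = ∑ X ∈ Finset.univ.filter
          (fun X : Finset E => (Y \ Z) ⊆ X ∧ Disjoint (Y ∩ Z) X), P X := by
    apply Finset.sum_nbij' (fun X => symmDiff X Z) (fun X => symmDiff X Z)
    · intro X hX
      rw [Finset.mem_filter] at hX ⊢
      refine ⟨Finset.mem_univ _, ?_, ?_⟩
      · intro x hx
        rw [Finset.mem_sdiff] at hx
        rw [Finset.mem_symmDiff]
        exact Or.inl ⟨hX.2 hx.1, hx.2⟩
      · rw [Finset.disjoint_left]
        intro x hx hxX
        rw [Finset.mem_inter] at hx
        rw [Finset.mem_symmDiff] at hxX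
        rcases hxX with ⟨h1, h2⟩ | ⟨h1, h2⟩
        · exact h2 hx.2
        · exact h2 (hX.2 hx.1)
    · intro X hX
      rw [Finset.mem_filter] at hX ⊢
      refine ⟨Finset.mem_univ _, ?_⟩
      intro y hy
      rw [Finset.mem_symmDiff]
      by_cases hz : y ∈ Z
      · refine Or.inr ⟨hz, ?_⟩
        exact Finset.disjoint_left.mp hX.2.2 (Finset.mem_inter.mpr ⟨hy, hz⟩)
      · exact Or.inl ⟨hX.2.1 (Finset.mem_sdiff.mpr ⟨hy, hz⟩), hz⟩
    · intro X _
      exact symmDiff_symmDiff_cancel_right Z X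
    · intro X _
      exact symmDiff_symmDiff_cancel_right Z X
    · intro X _
      rfl
  rw [hreindex]
  have hdisj : Disjoint (Y \ Z) (Y ∩ Z) := by
    rw [Finset.disjoint_left]
    intro x hx hx'
    exact (Finset.mem_sdiff.mp hx).2 (Finset.mem_inter.mp hx').2
  have hU : (Y \ Z) ∪ (Y ∩ Z) = Y := by
    ext x
    simp only [Finset.mem_union, Finset.mem_sdiff, Finset.mem_inter]
    tauto
  rw [main_lemma P K hdet (Y ∩ Z) (Y \ Z) hdisj]
  have hm : Dmat K (Y ∩ Z) ((Y \ Z) ∪ (Y ∩ Z))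
      = Matrix.of fun a b : {x // x ∈ (Y \ Z) ∪ (Y ∩ Z)} =>
          if (a : E) ∈ Z then (if (a : E) = (b : E) then 1 else 0) - K (a : E) (b : E)
          else K (a : E) (b : E) := by
    ext a b
    have ha : a.1 ∈ Y := by
      rcases Finset.mem_union.mp a.2 with h | h
      · exact (Finset.mem_sdiff.mp h).1
      · exact (Finset.mem_inter.mp h).1
    have hiff : a.1 ∈ Y ∩ Z ↔ a.1 ∈ Z := by
      rw [Finset.mem_inter]
      exact ⟨fun h => h.2, fun h => ⟨ha, h⟩⟩
    simp only [Dmat, Matrix.of_apply]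
    by_cases hz : a.1 ∈ Z
    · simp [hiff.mpr hz, hz]
    · simp [fun h => hz (hiff.mp h), hz]
  rw [hm]
  exact det_of_congr (fun x y => if x ∈ Z then (if x = y then 1 else 0) - K x y else K x y) hU
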